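/- Let I = [a,b] ⊂ ℝ be a segment, and let (μ_n) and μ be Borel probability measures supported in I. Then μ_n converges to μ in the weak topology if and only if p_{μ_n}(z) converges to p_μ(z) for every z ∈ ℂ ∖ I. -/

import Mathlib

open MeasureTheory Complex Set
open scoped ENNReal NNReal

noncomputable def logEnergy (μ : Measure ℂ) : EReal :=
  ((∫⁻ p : ℂ × ℂ, ENNReal.ofReal (Real.log ‖p.1 - p.2‖) ∂(μ.prod μ) : ℝ≥0∞) : EReal)
    - ((∫⁻ p : ℂ × ℂ, ENNReal.ofReal (-Real.log ‖p.1 - p.2‖) ∂(μ.prod μ) : ℝ≥0∞) : EReal)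

noncomputable def potential (μ : Measure ℂ) (z : ℂ) : EReal :=
  ((∫⁻ w, ENNReal.ofReal (Real.log ‖w - z‖) ∂μ : ℝ≥0∞) : EReal)
    - ((∫⁻ w, ENNReal.ofReal (-Real.log ‖w - z‖) ∂μ : ℝ≥0∞) : EReal)

def SupportedIn (μ : Measure ℂ) (K : Set ℂ) : Prop := μ Kᶜ = 0

noncomputable def logCapacity (K : Set ℂ) : EReal :=
  sSup (logEnergy '' {μ : Measure ℂ | IsProbabilityMeasure μ ∧ SupportedIn μ K})

def IsEquilibriumMeasure (μ : Measure ℂ) (K : Set ℂ) : Prop :=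
  IsProbabilityMeasure μ ∧ SupportedIn μ K ∧ logEnergy μ = logCapacity K

def Irr (K : Set ℂ) : Set (Polynomial ℤ) :=
  {P | P.Monic ∧ Irreducible P ∧ 1 ≤ P.natDegree ∧
    ∀ z ∈ (P.map (Int.castRingHom ℂ)).roots, z ∈ K}

noncomputable def rootMeasure (P : Polynomial ℤ) : Measure ℂ :=
  (P.natDegree : ℝ≥0∞)⁻¹ • ((P.map (Int.castRingHom ℂ)).roots.map Measure.dirac).sum

noncomputable def Minf (K : Set ℂ) : Set (ProbabilityMeasure ℂ) :=
  ⋂ F ∈ {F : Finset (Polynomial ℤ) | ↑F ⊆ Irr K},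
    closure {ν : ProbabilityMeasure ℂ |
      ν.toMeasure ∈ convexHull ℝ≥0 (rootMeasure '' (Irr K \ ↑F))}

def HarmonicOnSet (u : ℂ → ℝ) (U : Set ℂ) : Prop :=
  ∀ z ∈ U, ContDiffAt ℝ 2 u z ∧
    fderiv ℝ (fun w => fderiv ℝ u w 1) z 1
      + fderiv ℝ (fun w => fderiv ℝ u w Complex.I) z Complex.I = 0


open MeasureTheory Complex Set Filter
open scoped ENNReal NNReal Topology

namespace Stmt10Aux

variable {a b : ℝ}

/-- projection of ℂ onto the segment -/
noncomputable def pr (hab : a ≤ b) : ℂ → Icc a b := fun w => projIcc a b hab w.re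

lemma cont_pr (hab : a ≤ b) : Continuous (pr hab) :=
  continuous_projIcc.comp Complex.continuous_re

lemma pr_eq (hab : a ≤ b) {w : ℂ} (hw : w ∈ Complex.ofReal '' Icc a b) :
    ((pr hab w : ℝ) : ℂ) = w := by
  obtain ⟨x, hx, rfl⟩ := hw
  simp [pr, Complex.ofReal_re, projIcc_of_mem hab hx]

lemma integrable_comp (hab : a ≤ b) (m : Measure ℂ) [IsFiniteMeasure m] (q : C(Icc a b, ℝ)) :
    Integrable (fun w => q (pr hab w)) m :=
  (BoundedContinuousFunction.ofNormedAddCommGroup (fun w => q (pr hab w))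
    (q.continuous.comp (cont_pr hab)) ‖q‖ (fun w => q.norm_coe_le_norm _)).integrable m

lemma ae_mem {m : Measure ℂ} (hs : m (Complex.ofReal '' Icc a b)ᶜ = 0) :
    ∀ᵐ w ∂m, w ∈ Complex.ofReal '' Icc a b := by
  rw [ae_iff]
  simpa [Set.compl_def] using hs

/-- the function x ↦ log |x - z| -/
noncomputable def logq (hab : a ≤ b) (z : ℂ) (hz : z ∉ Complex.ofReal '' Icc a b) :
    C(Icc a b, ℝ) :=
  ⟨fun x => Real.log ‖((x : ℝ) : ℂ) - z‖, by
    apply Continuous.log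
    · exact continuous_norm.comp ((Complex.continuous_ofReal.comp continuous_subtype_val).sub continuous_const)
    · intro x
      refine norm_ne_zero_iff.mpr (sub_ne_zero.mpr ?_)
      intro h
      exact hz ⟨x, x.2, h⟩⟩

lemma ereal_coe_toReal {A : ℝ≥0∞} (h : A ≠ ⊤) : ((A.toReal : ℝ) : EReal) = (A : EReal) := by
  conv_rhs => rw [← ENNReal.ofReal_toReal h]
  rw [EReal.coe_ennreal_ofReal, max_eq_left ENNReal.toReal_nonneg]

lemma potential_eq (hab : a ≤ b) (m : Measure ℂ) [IsProbabilityMeasure m]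
    (hs : m (Complex.ofReal '' Icc a b)ᶜ = 0) (z : ℂ) (hz : z ∉ Complex.ofReal '' Icc a b) :
    potential m z = ((∫ w, (logq hab z hz) (pr hab w) ∂m : ℝ) : EReal) := by
  set f : ℂ → ℝ := fun w => (logq hab z hz) (pr hab w) with hf
  have hfb : ∀ w, ‖f w‖ ≤ ‖logq hab z hz‖ := fun w => (logq hab z hz).norm_coe_le_norm _
  have hint : Integrable f m := integrable_comp hab m _
  have hae : ∀ᵐ w ∂m, Real.log ‖w - z‖ = f w := by
    refine (ae_mem hs).mono fun w hw => ?_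
    simp only [hf, logq, ContinuousMap.coe_mk]
    rw [pr_eq hab hw]
  have h1 : ∫⁻ w, ENNReal.ofReal (Real.log ‖w - z‖) ∂m
      = ∫⁻ w, ENNReal.ofReal (f w) ∂m :=
    lintegral_congr_ae (hae.mono fun w h => by simp only []; rw [h])
  have h2 : ∫⁻ w, ENNReal.ofReal (-Real.log ‖w - z‖) ∂m
      = ∫⁻ w, ENNReal.ofReal (-f w) ∂m :=
    lintegral_congr_ae (hae.mono fun w h => by simp only []; rw [h])
  have hA : ∫⁻ w, ENNReal.ofReal (f w) ∂m ≠ ⊤ := by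
    refine ne_top_of_le_ne_top (b := ENNReal.ofReal ‖logq hab z hz‖ * m univ) ?_ ?_
    · finiteness
    · rw [← lintegral_const]
      exact lintegral_mono fun w =>
        ENNReal.ofReal_le_ofReal ((le_abs_self _).trans (hfb w))
  have hB : ∫⁻ w, ENNReal.ofReal (-f w) ∂m ≠ ⊤ := by
    refine ne_top_of_le_ne_top (b := ENNReal.ofReal ‖logq hab z hz‖ * m univ) ?_ ?_
    · finiteness
    · rw [← lintegral_const]
      exact lintegral_mono fun w =>
        ENNReal.ofReal_le_ofReal ((neg_le_abs _).trans (hfb w))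
  rw [potential, h1, h2, integral_eq_lintegral_pos_part_sub_lintegral_neg_part hint,
    EReal.coe_sub, ereal_coe_toReal hA, ereal_coe_toReal hB]

/-- the function x ↦ (t - x)⁻¹ -/
noncomputable def gq (hab : a ≤ b) (t : ℝ) (ht : b < t) : C(Icc a b, ℝ) :=
  ⟨fun x => (t - x)⁻¹, by
    apply Continuous.inv₀
    · exact continuous_const.sub continuous_subtype_val
    · intro x; have := x.2.2; intro h; nlinarith [sub_eq_zero.mp h]⟩

/-- the function x ↦ log (t - x) -/
noncomputable def lg (hab : a ≤ b) (t : ℝ) (ht : b < t) : C(Icc a b, ℝ) :=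
  ⟨fun x => Real.log (t - x), by
    apply Continuous.log
    · exact continuous_const.sub continuous_subtype_val
    · intro x; have h2 := x.2.2; exact ne_of_gt (by linarith)⟩

lemma logq_real (hab : a ≤ b) (t : ℝ) (ht : b < t) (hz : (t : ℂ) ∉ Complex.ofReal '' Icc a b) :
    logq hab t hz = lg hab t ht := by
  ext x
  have hx := x.2.2
  simp only [logq, lg, ContinuousMap.coe_mk]
  rw [← Complex.ofReal_sub, Complex.norm_real, Real.norm_eq_abs, abs_of_nonpos (by linarith)]
  ring_nf

lemma real_notin (hab : a ≤ b) (t : ℝ) (ht : b < t) :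
    (t : ℂ) ∉ Complex.ofReal '' Icc a b := by
  rintro ⟨x, hx, h⟩
  have : x = t := Complex.ofReal_injective h
  subst this
  exact absurd hx.2 (not_le.mpr ht)

/-- generators -/
def S (hab : a ≤ b) : Set C(Icc a b, ℝ) :=
  insert 1 {q | ∃ t, ∃ ht : b < t, q = gq hab t ht}

lemma gq_dist (hab : a ≤ b) (t s : ℝ) (ht : b < t) (hts : t ≤ s) (hsb : b < s) :
    ‖gq hab s hsb - gq hab t ht‖ ≤ (s - t) / (t - b) ^ 2 := by
  have hpos : (0:ℝ) < (t - b) ^ 2 := by nlinarith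
  refine (ContinuousMap.norm_le _ (div_nonneg (by linarith) hpos.le)).mpr fun x => ?_
  have hx2 := x.2.2
  have hc : (0:ℝ) < t - ↑x := by linarith
  have hd : (0:ℝ) < s - ↑x := by linarith
  simp only [gq, ContinuousMap.sub_apply, ContinuousMap.coe_mk, Real.norm_eq_abs]
  have hid : (t - ↑x)⁻¹ - (s - ↑x)⁻¹ = (s - t) / ((t - ↑x) * (s - ↑x)) := by
    field_simp
    ring
  rw [abs_sub_comm, hid, _root_.abs_of_nonneg (div_nonneg (by linarith) (by positivity))]
  rw [div_le_div_iff₀ (by positivity) hpos]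
  have key : (t - b) ^ 2 ≤ (t - ↑x) * (s - ↑x) := by nlinarith
  nlinarith [mul_le_mul_of_nonneg_left key (sub_nonneg.mpr hts)]

lemma span_dense (hab : a ≤ b) :
    (Submodule.span ℝ (S hab)).topologicalClosure = ⊤ := by
  set M := (Submodule.span ℝ (S hab)).topologicalClosure with hM
  have hMclosed : IsClosed (M : Set C(Icc a b, ℝ)) := Submodule.isClosed_topologicalClosure _
  have hMcoe : (M : Set C(Icc a b, ℝ)) = closure (Submodule.span ℝ (S hab) : Set _) :=
    Submodule.topologicalClosure_coe _
  have h1span : (1 : C(Icc a b, ℝ)) ∈ Submodule.span ℝ (S hab) :=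
    Submodule.subset_span (mem_insert _ _)
  have hgspan : ∀ (t : ℝ) (ht : b < t), gq hab t ht ∈ Submodule.span ℝ (S hab) :=
    fun t ht => Submodule.subset_span (mem_insert_iff.mpr (Or.inr ⟨t, ht, rfl⟩))
  have hspanM : Submodule.span ℝ (S hab) ≤ M := Submodule.le_topologicalClosure _
  -- products of two distinct generators
  have hgg' : ∀ (s t : ℝ) (hs : b < s) (ht : b < t), s ≠ t →
      gq hab s hs * gq hab t ht ∈ M := by
    intro s t hs ht hst
    have hid : gq hab s hs * gq hab t ht = (s - t)⁻¹ • (gq hab t ht - gq hab s hs) := by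
      ext x
      have hx2 := x.2.2
      have hc : (0:ℝ) < t - ↑x := by linarith
      have hd : (0:ℝ) < s - ↑x := by linarith
      have hst' : s - t ≠ 0 := sub_ne_zero.mpr hst
      simp only [gq, ContinuousMap.mul_apply, ContinuousMap.smul_apply,
        ContinuousMap.sub_apply, ContinuousMap.coe_mk, smul_eq_mul]
      field_simp
      ring
    rw [hid]
    exact hspanM (Submodule.smul_mem _ _ (sub_mem (hgspan t ht) (hgspan s hs)))
  -- products of any two generators
  have hgg : ∀ (s t : ℝ) (hs : b < s) (ht : b < t), gq hab s hs * gq hab t ht ∈ M := by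
    intro s t hs ht
    rcases ne_or_eq s t with hst | rfl
    · exact hgg' s t hs ht hst
    · -- s = t : approximate by gq (s + 1/(k+1)) * gq s
      have hu : ∀ k : ℕ, b < s + 1 / (k + 1 : ℝ) := fun k => by
        have : (0:ℝ) < 1 / (k + 1 : ℝ) := by positivity
        linarith
      have hmem : ∀ k : ℕ, gq hab (s + 1 / (k + 1 : ℝ)) (hu k) * gq hab s hs ∈ M := by
        intro k
        refine hgg' _ s (hu k) hs ?_
        have : (0:ℝ) < 1 / (k + 1 : ℝ) := by positivity
        intro h; linarith [h]
      have htnd : Tendsto (fun k : ℕ => gq hab (s + 1 / (k + 1 : ℝ)) (hu k)) atTop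
          (𝓝 (gq hab s hs)) := by
        rw [tendsto_iff_dist_tendsto_zero]
        refine squeeze_zero (g := fun k : ℕ => (1 / (k + 1 : ℝ)) * ((s - b) ^ 2)⁻¹)
          (fun k => dist_nonneg) (fun k => ?_) ?_
        · rw [dist_eq_norm]
          have hle := gq_dist hab s (s + 1 / (k + 1 : ℝ)) hs
            (le_add_of_nonneg_right (by positivity)) (hu k)
          calc ‖_ - _‖ ≤ (s + 1 / (k + 1 : ℝ) - s) / (s - b) ^ 2 := hle
            _ = (1 / (k + 1 : ℝ)) * ((s - b) ^ 2)⁻¹ := by ring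
        · have := tendsto_one_div_add_atTop_nhds_zero_nat.mul_const (((s - b) ^ 2)⁻¹)
          simpa using this
      have htnd2 : Tendsto (fun k : ℕ => gq hab (s + 1 / (k + 1 : ℝ)) (hu k) * gq hab s hs)
          atTop (𝓝 (gq hab s hs * gq hab s hs)) := htnd.mul tendsto_const_nhds
      exact hMclosed.mem_of_tendsto htnd2 (Filter.Eventually.of_forall hmem)
  -- products of generators from S
  have hSS : ∀ p ∈ S hab, ∀ q ∈ S hab, p * q ∈ M := by
    rintro p hp q hq
    rcases hp with rfl | ⟨t, ht, rfl⟩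
    · rcases hq with rfl | ⟨u, hu, rfl⟩
      · simpa using hspanM h1span
      · simpa using hspanM (hgspan u hu)
    · rcases hq with rfl | ⟨u, hu, rfl⟩
      · simpa using hspanM (hgspan t ht)
      · exact hgg t u ht hu
  -- products of span elements
  have hspanspan : ∀ p ∈ Submodule.span ℝ (S hab), ∀ q ∈ Submodule.span ℝ (S hab),
      p * q ∈ M := by
    intro p hp
    induction hp using Submodule.span_induction with
    | mem p hpS =>
      intro q hq
      induction hq using Submodule.span_induction with
      | mem q hqS => exact hSS _ hpS _ hqS
      | zero => simpa using M.zero_mem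
      | add q r _ _ hq hr => rw [mul_add]; exact M.add_mem hq hr
      | smul c q _ hq => rw [mul_smul_comm]; exact M.smul_mem _ hq
    | zero => intro q hq; simpa using M.zero_mem
    | add p r _ _ hp hr => intro q hq; rw [add_mul]; exact M.add_mem (hp q hq) (hr q hq)
    | smul c p _ hp => intro q hq; rw [smul_mul_assoc]; exact M.smul_mem _ (hp q hq)
  -- span * M ⊆ M
  have hspanM' : ∀ p ∈ Submodule.span ℝ (S hab), ∀ q ∈ M, p * q ∈ M := by
    intro p hp q hq
    have hq' : q ∈ closure (Submodule.span ℝ (S hab) : Set _) := by rw [← hMcoe]; exact hq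
    have := map_mem_closure (continuous_mul_left p) hq'
      (fun r hr => hspanspan p hp r hr : MapsTo (fun x => p * x) _ (M : Set _))
    rwa [hMclosed.closure_eq] at this
  -- M * M ⊆ M
  have hMM : ∀ p ∈ M, ∀ q ∈ M, p * q ∈ M := by
    intro p hp q hq
    have hp' : p ∈ closure (Submodule.span ℝ (S hab) : Set _) := by rw [← hMcoe]; exact hp
    have := map_mem_closure (continuous_mul_right q) hp'
      (fun r hr => hspanM' r hr q hq : MapsTo (fun x => x * q) _ (M : Set _))
    rwa [hMclosed.closure_eq] at this
  -- Stone-Weierstrass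
  set G : Set C(Icc a b, ℝ) := {q | ∃ t, ∃ ht : b < t, q = gq hab t ht} with hG
  set A := Algebra.adjoin ℝ G with hA
  have hAsep : A.SeparatesPoints := by
    intro x y hxy
    refine ⟨_, ⟨gq hab (b + 1) (by linarith), Algebra.subset_adjoin ⟨b + 1, by linarith, rfl⟩,
      rfl⟩, ?_⟩
    simp only [gq, ContinuousMap.coe_mk]
    intro h
    have h2 : b + 1 - (x:ℝ) = b + 1 - (y:ℝ) := inv_injective h
    exact hxy (Subtype.ext (by linarith))
  have hAtop : A.topologicalClosure = ⊤ :=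
    ContinuousMap.subalgebra_topologicalClosure_eq_top_of_separatesPoints A hAsep
  have hAM : (A : Set C(Icc a b, ℝ)) ⊆ (M : Set _) := by
    intro p hp
    induction hp using Algebra.adjoin_induction with
    | mem p hpG => obtain ⟨t, ht, rfl⟩ := hpG; exact hspanM (hgspan t ht)
    | algebraMap r =>
      rw [Algebra.algebraMap_eq_smul_one]
      exact M.smul_mem _ (hspanM h1span)
    | add p q _ _ hp hq => exact M.add_mem hp hq
    | mul p q _ _ hp hq => exact hMM p hp q hq
  rw [eq_top_iff]
  intro p _
  have hp : p ∈ closure (A : Set C(Icc a b, ℝ)) := by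
    have : p ∈ ((⊤ : Subalgebra ℝ C(Icc a b, ℝ)) : Set _) := trivial
    rw [← hAtop] at this
    rwa [← Subalgebra.topologicalClosure_coe]
  have := closure_mono hAM hp
  rwa [hMclosed.closure_eq] at this

lemma log_dq {c δ : ℝ} (hc : 0 < c) (hδ : 0 < δ) :
    |(Real.log (c + δ) - Real.log c) / δ - c⁻¹| ≤ δ / c ^ 2 := by
  set u := δ / c with hu
  have hu0 : 0 < u := by positivity
  have hlog : Real.log (c + δ) - Real.log c = Real.log (1 + u) := by
    rw [← Real.log_div (by positivity) hc.ne']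
    congr 1
    rw [hu]
    field_simp
  have hup : Real.log (1 + u) ≤ u := by
    have := Real.log_le_sub_one_of_pos (x := 1 + u) (by positivity)
    linarith
  have hlow : u - u ^ 2 ≤ Real.log (1 + u) := by
    have h2 := Real.log_le_sub_one_of_pos (x := (1 + u)⁻¹) (by positivity)
    rw [Real.log_inv] at h2
    have h4 : 1 / (1 + u) ≤ 1 - u + u ^ 2 := (div_le_iff₀ (by positivity)).mpr (by nlinarith)
    rw [one_div] at h4
    linarith
  have e1 : u / δ = c⁻¹ := by rw [hu]; field_simp
  have e2 : u ^ 2 / δ = δ / c ^ 2 := by rw [hu]; field_simp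
  have hδc : (0:ℝ) ≤ δ / c ^ 2 := by positivity
  rw [hlog, abs_le]
  constructor
  · have h5 : (u - u ^ 2) / δ ≤ Real.log (1 + u) / δ := by gcongr
    rw [sub_div, e1, e2] at h5
    linarith
  · have h6 : Real.log (1 + u) / δ ≤ u / δ := by gcongr
    rw [e1] at h6
    linarith

lemma conv_all (hab : a ≤ b) (μ : ℕ → Measure ℂ) (ν : Measure ℂ)
    (hμp : ∀ n, IsProbabilityMeasure (μ n)) (hνp : IsProbabilityMeasure ν)
    (hlg : ∀ (t : ℝ) (ht : b < t),
      Tendsto (fun n => ∫ w, (lg hab t ht) (pr hab w) ∂(μ n)) atTop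
        (𝓝 (∫ w, (lg hab t ht) (pr hab w) ∂ν)))
    (p : C(Icc a b, ℝ)) :
    Tendsto (fun n => ∫ w, p (pr hab w) ∂(μ n)) atTop (𝓝 (∫ w, p (pr hab w) ∂ν)) := by
  have hμf : ∀ n, IsFiniteMeasure (μ n) := fun n => by haveI := hμp n; infer_instance
  -- the integration functionals are 1-Lipschitz
  have hdist : ∀ (m : Measure ℂ), IsProbabilityMeasure m → ∀ q r : C(Icc a b, ℝ),
      dist (∫ w, q (pr hab w) ∂m) (∫ w, r (pr hab w) ∂m) ≤ dist q r := by
    intro m hm q r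
    haveI := hm
    rw [Real.dist_eq, ← integral_sub (integrable_comp hab m q) (integrable_comp hab m r)]
    have hb : ∀ᵐ w ∂m, ‖q (pr hab w) - r (pr hab w)‖ ≤ dist q r :=
      Filter.Eventually.of_forall fun w => by
        rw [← dist_eq_norm]; exact ContinuousMap.dist_apply_le_dist _
    have := norm_integral_le_of_norm_le_const hb
    simpa [Real.norm_eq_abs] using this
  set W : Set C(Icc a b, ℝ) :=
    {q | Tendsto (fun n => ∫ w, q (pr hab w) ∂(μ n)) atTop (𝓝 (∫ w, q (pr hab w) ∂ν))} with hW
  -- W is stable under limits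
  have hWlim : ∀ (u : ℕ → C(Icc a b, ℝ)), (∀ k, u k ∈ W) → ∀ q,
      Tendsto u atTop (𝓝 q) → q ∈ W := by
    intro u hu q hq
    rw [hW, mem_setOf_eq, Metric.tendsto_atTop]
    intro ε hε
    obtain ⟨k, hk⟩ : ∃ k, dist (u k) q < ε / 3 := by
      obtain ⟨N, hN⟩ := Metric.tendsto_atTop.mp hq (ε / 3) (by linarith)
      exact ⟨N, hN N le_rfl⟩
    obtain ⟨N, hN⟩ := Metric.tendsto_atTop.mp (hu k) (ε / 3) (by linarith)
    refine ⟨N, fun n hn => ?_⟩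
    have h1 := hdist (μ n) (hμp n) q (u k)
    have h2 := hN n hn
    have h3 := hdist ν hνp (u k) q
    have hd1 : dist (u k) q = dist q (u k) := dist_comm _ _
    calc dist (∫ w, q (pr hab w) ∂(μ n)) (∫ w, q (pr hab w) ∂ν)
        ≤ dist (∫ w, q (pr hab w) ∂(μ n)) (∫ w, (u k) (pr hab w) ∂(μ n))
          + dist (∫ w, (u k) (pr hab w) ∂(μ n)) (∫ w, (u k) (pr hab w) ∂ν)
          + dist (∫ w, (u k) (pr hab w) ∂ν) (∫ w, q (pr hab w) ∂ν) := dist_triangle4 _ _ _ _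
      _ < ε / 3 + ε / 3 + ε / 3 := by
          refine add_lt_add_of_lt_of_lt (add_lt_add_of_le_of_lt ?_ h2) ?_
          · exact (h1.trans_lt (by rw [← hd1]; exact hk)).le
          · exact h3.trans_lt hk
      _ = ε := by ring
  -- W is a "submodule"
  have hW0 : (0 : C(Icc a b, ℝ)) ∈ W := by
    simp only [hW, mem_setOf_eq, ContinuousMap.zero_apply, integral_zero]
    exact tendsto_const_nhds
  have hWadd : ∀ q ∈ W, ∀ r ∈ W, q + r ∈ W := by
    intro q hq r hr
    simp only [hW, mem_setOf_eq, ContinuousMap.add_apply] at *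
    have heq : ∀ (m : Measure ℂ), IsFiniteMeasure m →
        ∫ w, (q (pr hab w) + r (pr hab w)) ∂m
          = ∫ w, q (pr hab w) ∂m + ∫ w, r (pr hab w) ∂m := fun m hm => by
      haveI := hm
      exact integral_add (integrable_comp hab m q) (integrable_comp hab m r)
    rw [heq ν (by haveI := hνp; infer_instance)]
    refine Tendsto.congr (fun n => (heq (μ n) (hμf n)).symm) (hq.add hr)
  have hWsmul : ∀ (c : ℝ), ∀ q ∈ W, c • q ∈ W := by
    intro c q hq
    simp only [hW, mem_setOf_eq, ContinuousMap.smul_apply, smul_eq_mul] at *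
    have heq : ∀ (m : Measure ℂ),
        ∫ w, c * q (pr hab w) ∂m = c * ∫ w, q (pr hab w) ∂m := fun m => by
      rw [← smul_eq_mul, ← integral_smul]; simp [smul_eq_mul]
    rw [heq ν]
    exact Tendsto.congr (fun n => (heq (μ n)).symm) (hq.const_mul c)
  have hWsub : ∀ q ∈ W, ∀ r ∈ W, q - r ∈ W := by
    intro q hq r hr
    have := hWadd q hq _ (hWsmul (-1) r hr)
    simpa [sub_eq_add_neg, neg_one_smul] using this
  -- constants are in W
  have h1W : (1 : C(Icc a b, ℝ)) ∈ W := by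
    simp only [hW, mem_setOf_eq, ContinuousMap.one_apply]
    have heq : ∀ (m : Measure ℂ), IsProbabilityMeasure m → ∫ (_ : ℂ), (1:ℝ) ∂m = 1 := by
      intro m hm; haveI := hm; simp
    rw [heq ν hνp]
    exact Tendsto.congr (fun n => (heq (μ n) (hμp n)).symm) tendsto_const_nhds
  -- the log functions are in W
  have hlgW : ∀ (t : ℝ) (ht : b < t), lg hab t ht ∈ W := fun t ht => hlg t ht
  -- the inverse functions are in W
  have hgqW : ∀ (t : ℝ) (ht : b < t), gq hab t ht ∈ W := by
    intro t ht
    have hδ : ∀ k : ℕ, (0:ℝ) < 1 / (k + 1) := fun k => by positivity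
    have htk : ∀ k : ℕ, b < t + 1 / (k + 1 : ℝ) := fun k => by linarith [hδ k]
    set q : ℕ → C(Icc a b, ℝ) := fun k =>
      ((k : ℝ) + 1) • (lg hab (t + 1 / (k + 1 : ℝ)) (htk k) - lg hab t ht) with hq
    have hqW : ∀ k, q k ∈ W := fun k =>
      hWsmul _ _ (hWsub _ (hlgW _ (htk k)) _ (hlgW t ht))
    refine hWlim q hqW _ ?_
    rw [tendsto_iff_dist_tendsto_zero]
    refine squeeze_zero (g := fun k : ℕ => (1 / (k + 1 : ℝ)) * ((t - b) ^ 2)⁻¹)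
      (fun k => dist_nonneg) (fun k => ?_) ?_
    · rw [dist_eq_norm]
      have hpos : (0:ℝ) < (t - b) ^ 2 := by nlinarith
      have hnn : (0:ℝ) ≤ (1 / (k + 1 : ℝ)) * ((t - b) ^ 2)⁻¹ := by positivity
      refine (ContinuousMap.norm_le _ hnn).mpr fun x => ?_
      have hx2 := x.2.2
      have hc : (0:ℝ) < t - ↑x := by linarith
      set δ : ℝ := 1 / (k + 1 : ℝ) with hδdef
      have hδ0 : (0:ℝ) < δ := hδ k
      have key := log_dq hc hδ0
      simp only [hq, lg, gq, ContinuousMap.smul_apply, ContinuousMap.sub_apply,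
        ContinuousMap.coe_mk, smul_eq_mul, Real.norm_eq_abs]
      have harg : t + δ - ↑x = (t - ↑x) + δ := by ring
      have hk1 : (k : ℝ) + 1 = δ⁻¹ := by rw [hδdef]; field_simp
      have hrw : ((k : ℝ) + 1) * (Real.log (t + δ - ↑x) - Real.log (t - ↑x))
          = (Real.log ((t - ↑x) + δ) - Real.log (t - ↑x)) / δ := by
        rw [harg, hk1, div_eq_inv_mul]
      rw [hrw]
      refine key.trans ?_
      have hb0 : (0:ℝ) < t - b := by linarith
      rw [div_eq_mul_inv]
      gcongr
      all_goals linarith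
    · have := tendsto_one_div_add_atTop_nhds_zero_nat.mul_const (((t - b) ^ 2)⁻¹)
      simpa using this
  -- S ⊆ W
  have hSW : S hab ⊆ W := by
    rintro q (rfl | ⟨t, ht, rfl⟩)
    · exact h1W
    · exact hgqW t ht
  -- span S ⊆ W
  have hspanW : ∀ q ∈ Submodule.span ℝ (S hab), q ∈ W := by
    intro q hq
    induction hq using Submodule.span_induction with
    | mem q hqS => exact hSW hqS
    | zero => exact hW0
    | add q r _ _ hq hr => exact hWadd q hq r hr
    | smul c q _ hq => exact hWsmul c q hq
  -- conclude by density
  have hp : p ∈ closure (Submodule.span ℝ (S hab) : Set C(Icc a b, ℝ)) := by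
    rw [← Submodule.topologicalClosure_coe, span_dense hab]
    trivial
  obtain ⟨u, huS, hulim⟩ := mem_closure_iff_seq_limit.mp hp
  exact hWlim u (fun k => hspanW _ (huS k)) p hulim

end Stmt10Aux

open Stmt10Aux Filter in
theorem stmt10 (a b : ℝ) (hab : a ≤ b)
    (I : Set ℂ) (hI : I = Complex.ofReal '' Set.Icc a b)
    (μ : ℕ → Measure ℂ) (ν : Measure ℂ)
    (hμ : ∀ n, IsProbabilityMeasure (μ n) ∧ SupportedIn (μ n) I)
    (hν : IsProbabilityMeasure ν) (hνs : SupportedIn ν I) :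
    (∀ f : BoundedContinuousFunction ℂ ℝ,
        Filter.Tendsto (fun n => ∫ z, f z ∂(μ n)) Filter.atTop (nhds (∫ z, f z ∂ν)))
      ↔ (∀ z : ℂ, z ∉ I →
        Filter.Tendsto (fun n => potential (μ n) z) Filter.atTop (nhds (potential ν z))) := by
  subst hI
  haveI := hν
  haveI : ∀ n, IsProbabilityMeasure (μ n) := fun n => (hμ n).1
  constructor
  · intro h z hz
    rw [potential_eq hab ν hνs z hz]
    have hrw : ∀ n, potential (μ n) z
        = ((∫ w, (logq hab z hz) (pr hab w) ∂(μ n) : ℝ) : EReal) :=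
      fun n => potential_eq hab (μ n) (hμ n).2 z hz
    refine Filter.Tendsto.congr (fun n => (hrw n).symm) ?_
    apply EReal.tendsto_coe.mpr
    have hF := h (BoundedContinuousFunction.ofNormedAddCommGroup
      (fun w => (logq hab z hz) (pr hab w))
      ((logq hab z hz).continuous.comp (cont_pr hab)) ‖logq hab z hz‖
      (fun w => (logq hab z hz).norm_coe_le_norm _))
    simpa using hF
  · intro h f
    have hlg : ∀ (t : ℝ) (ht : b < t),
        Filter.Tendsto (fun n => ∫ w, (lg hab t ht) (pr hab w) ∂(μ n)) Filter.atTop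
          (nhds (∫ w, (lg hab t ht) (pr hab w) ∂ν)) := by
      intro t ht
      have hz := real_notin hab t ht
      have h2 := h t hz
      rw [potential_eq hab ν hνs _ hz] at h2
      have hrw : ∀ n, potential (μ n) (t : ℂ)
          = ((∫ w, (logq hab (t : ℂ) hz) (pr hab w) ∂(μ n) : ℝ) : EReal) :=
        fun n => potential_eq hab (μ n) (hμ n).2 _ hz
      have h3 := EReal.tendsto_coe.mp (Filter.Tendsto.congr (fun n => hrw n) h2)
      rw [logq_real hab t ht hz] at h3
      exact h3
    set p : C(Icc a b, ℝ) :=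
      ⟨fun x => f ((x : ℝ) : ℂ),
        f.continuous.comp (Complex.continuous_ofReal.comp continuous_subtype_val)⟩ with hp
    have hcv := conv_all hab μ ν (fun n => (hμ n).1) hν hlg p
    have heq : ∀ (m : Measure ℂ), IsProbabilityMeasure m →
        m (Complex.ofReal '' Icc a b)ᶜ = 0 →
        ∫ z, f z ∂m = ∫ w, p (pr hab w) ∂m := by
      intro m hm hs
      haveI := hm
      refine integral_congr_ae ((ae_mem hs).mono fun w hw => ?_)
      simp only [hp, ContinuousMap.coe_mk]
      rw [pr_eq hab hw]
    rw [heq ν hν hνs]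
    exact Filter.Tendsto.congr (fun n => (heq (μ n) (hμ n).1 (hμ n).2).symm) hcv
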